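/- Let m ≥ 0 be an integer. Then the quantity ∫₀^{1/q} z·(log z)^m/(z + 1)² dz, divided by (1/(m+1))·(log(1/q))^{m+1}, tends to 1 as q → 0⁺; in particular ∫₀^{1/q} z·(log z)^m/(z + 1)² dz = Θ((−log q)^{m+1}) as q → 0⁺. -/

import Mathlib

open MeasureTheory Filter Topology
open Set

/-- `I = Θ(R)` as `q → 0⁺`: there exist constants `0 < c ≤ C` and `q₀ > 0` such that
`c·R q ≤ I q ≤ C·R q` for all `0 < q < q₀`. -/
def IsThetaAtZero (I R : ℝ → ℝ) : Prop :=
  ∃ c C q₀ : ℝ, 0 < c ∧ c ≤ C ∧ 0 < q₀ ∧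
    ∀ q : ℝ, 0 < q → q < q₀ → c * R q ≤ I q ∧ I q ≤ C * R q

section AppendixCAux

noncomputable def fC (m : ℕ) (z : ℝ) : ℝ := z * (Real.log z) ^ m / (z + 1) ^ 2

lemma fC_contAt (m : ℕ) {z : ℝ} (hz : 0 < z) : ContinuousAt (fC m) z := by
  unfold fC
  exact ContinuousAt.div
    (continuousAt_id.mul ((Real.continuousAt_log hz.ne').pow m))
    ((continuousAt_id.add continuousAt_const).pow 2) (by positivity)

lemma fC_intInt_one (m : ℕ) {x : ℝ} (hx : 1 ≤ x) :
    IntervalIntegrable (fC m) volume 1 x := by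
  apply ContinuousOn.intervalIntegrable
  intro t ht
  rw [uIcc_of_le hx] at ht
  exact (fC_contAt m (lt_of_lt_of_le one_pos ht.1)).continuousWithinAt

lemma fC_bound01 (m : ℕ) {z : ℝ} (hz : z ∈ Ioc (0:ℝ) 1) :
    |fC m z| ≤ ((m:ℝ)+1)^m := by
  obtain ⟨hz0, hz1⟩ := hz
  have hm1 : (0:ℝ) < (m:ℝ)+1 := by positivity
  have e1 : |fC m z| = z * |Real.log z|^m / (z+1)^2 := by
    unfold fC
    rw [abs_div, abs_mul, abs_pow, abs_of_pos hz0, abs_of_pos (by positivity : (0:ℝ) < (z+1)^2)]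
  have hden : (1:ℝ) ≤ (z+1)^2 := by nlinarith
  have e2 : z * |Real.log z|^m / (z+1)^2 ≤ z * |Real.log z|^m :=
    div_le_self (by positivity) hden
  -- bound |log z|
  have hl : |Real.log z| ≤ ((m:ℝ)+1) * z ^ (-(1/((m:ℝ)+1))) := by
    have h0 : |Real.log z| = Real.log z⁻¹ := by
      rw [Real.log_inv, abs_of_nonpos (Real.log_nonpos hz0.le hz1)]
    have h1 := Real.log_le_rpow_div (inv_nonneg.mpr hz0.le)
      (by positivity : (0:ℝ) < 1/((m:ℝ)+1))
    rw [h0]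
    calc Real.log z⁻¹ ≤ z⁻¹ ^ (1/((m:ℝ)+1)) / (1/((m:ℝ)+1)) := h1
      _ = ((m:ℝ)+1) * z ^ (-(1/((m:ℝ)+1))) := by
          rw [Real.inv_rpow hz0.le, ← Real.rpow_neg hz0.le]
          field_simp
  -- now finish
  have hpow : |Real.log z|^m ≤ (((m:ℝ)+1) * z ^ (-(1/((m:ℝ)+1))))^m :=
    pow_le_pow_left₀ (abs_nonneg _) hl m
  have key : z * |Real.log z|^m ≤ ((m:ℝ)+1)^m := by
    calc z * |Real.log z|^m ≤ z * ((((m:ℝ)+1) * z ^ (-(1/((m:ℝ)+1))))^m) := by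
          exact mul_le_mul_of_nonneg_left hpow hz0.le
      _ = ((m:ℝ)+1)^m * (z * (z ^ (-(1/((m:ℝ)+1))))^m) := by rw [mul_pow]; ring
      _ = ((m:ℝ)+1)^m * z ^ (1/((m:ℝ)+1)) := by
          rw [← Real.rpow_natCast (z ^ (-(1/((m:ℝ)+1)))) m, ← Real.rpow_mul hz0.le]
          nth_rewrite 1 [← Real.rpow_one z]
          rw [← Real.rpow_add hz0]
          congr 2
          field_simp
          ring
      _ ≤ ((m:ℝ)+1)^m * 1 := by
          exact mul_le_mul_of_nonneg_left
            (Real.rpow_le_one hz0.le hz1 (by positivity)) (by positivity)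
      _ = ((m:ℝ)+1)^m := mul_one _
  calc |fC m z| = z * |Real.log z|^m / (z+1)^2 := e1
    _ ≤ z * |Real.log z|^m := e2
    _ ≤ ((m:ℝ)+1)^m := key

lemma fC_measurable (m : ℕ) : Measurable (fC m) := by
  unfold fC
  exact (measurable_id.mul (Real.measurable_log.pow_const m)).div
    ((measurable_id.add_const 1).pow_const 2)

lemma fC_intInt01 (m : ℕ) : IntervalIntegrable (fC m) volume 0 1 := by
  rw [intervalIntegrable_iff, uIoc_of_le (by norm_num : (0:ℝ) ≤ 1)]
  apply Measure.integrableOn_of_bounded (M := ((m:ℝ)+1)^m)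
  · simp [measure_Ioc_lt_top.ne]
  · exact (fC_measurable m).aestronglyMeasurable
  · rw [ae_restrict_iff' measurableSet_Ioc]
    filter_upwards with z hz
    rw [Real.norm_eq_abs]
    exact fC_bound01 m hz

/-- bound (log z)^m ≤ (2(m+1))^m √z for z ≥ 1 -/
lemma logpow_bound (m : ℕ) {z : ℝ} (hz : 1 ≤ z) :
    (Real.log z)^m ≤ (2*((m:ℝ)+1))^m * z ^ ((1:ℝ)/2) := by
  have hz0 : (0:ℝ) < z := lt_of_lt_of_le one_pos hz
  have hε : (0:ℝ) < 1/(2*((m:ℝ)+1)) := by positivity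
  have h1 : Real.log z ≤ 2*((m:ℝ)+1) * z ^ (1/(2*((m:ℝ)+1))) := by
    calc Real.log z ≤ z ^ (1/(2*((m:ℝ)+1))) / (1/(2*((m:ℝ)+1))) :=
          Real.log_le_rpow_div hz0.le hε
      _ = 2*((m:ℝ)+1) * z ^ (1/(2*((m:ℝ)+1))) := by
          field_simp
  calc (Real.log z)^m ≤ (2*((m:ℝ)+1) * z ^ (1/(2*((m:ℝ)+1))))^m :=
        pow_le_pow_left₀ (Real.log_nonneg hz) h1 m
    _ = (2*((m:ℝ)+1))^m * (z ^ (1/(2*((m:ℝ)+1))))^m := mul_pow _ _ m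
    _ ≤ (2*((m:ℝ)+1))^m * z ^ ((1:ℝ)/2) := by
        apply mul_le_mul_of_nonneg_left _ (by positivity)
        rw [← Real.rpow_natCast (z ^ (1/(2*((m:ℝ)+1)))) m, ← Real.rpow_mul hz0.le]
        apply Real.rpow_le_rpow_of_exponent_le hz
        rw [div_mul_eq_mul_div, div_le_div_iff₀ (by positivity) (by norm_num)]
        push_cast
        nlinarith [Nat.cast_nonneg (α := ℝ) m]

/-- difference between 1/z·logᵐ and f, for z ≥ 1 -/
lemma diff_bound (m : ℕ) {z : ℝ} (hz : 1 ≤ z) :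
    0 ≤ (Real.log z)^m / z - fC m z ∧
    (Real.log z)^m / z - fC m z ≤ 3 * (2*((m:ℝ)+1))^m * z ^ (-(3:ℝ)/2) := by
  have hz0 : (0:ℝ) < z := lt_of_lt_of_le one_pos hz
  have hd : (Real.log z)^m / z - fC m z = (Real.log z)^m * ((2*z+1)/(z*(z+1)^2)) := by
    unfold fC
    field_simp
    ring
  have hlog : 0 ≤ (Real.log z)^m := pow_nonneg (Real.log_nonneg hz) m
  have hq0 : 0 ≤ (2*z+1)/(z*(z+1)^2) := by positivity
  constructor
  · rw [hd]; positivity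
  · rw [hd]
    have hq : (2*z+1)/(z*(z+1)^2) ≤ 3/z^2 := by
      rw [div_le_div_iff₀ (by positivity) (by positivity)]
      nlinarith
    calc (Real.log z)^m * ((2*z+1)/(z*(z+1)^2)) ≤ (Real.log z)^m * (3/z^2) :=
          mul_le_mul_of_nonneg_left hq hlog
      _ ≤ ((2*((m:ℝ)+1))^m * z ^ ((1:ℝ)/2)) * (3/z^2) := by
          apply mul_le_mul_of_nonneg_right (logpow_bound m hz) (by positivity)
      _ = 3 * (2*((m:ℝ)+1))^m * (z ^ ((1:ℝ)/2) / z^2) := by ring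
      _ = 3 * (2*((m:ℝ)+1))^m * z ^ (-(3:ℝ)/2) := by
          congr 1
          rw [← Real.rpow_natCast z 2, ← Real.rpow_sub hz0]
          norm_num

lemma gC_contOn (m : ℕ) {x : ℝ} (hx : 1 ≤ x) :
    ContinuousOn (fun z => (Real.log z)^m / z) (uIcc (1:ℝ) x) := by
  rw [uIcc_of_le hx]
  intro t ht
  have ht0 : (0:ℝ) < t := lt_of_lt_of_le one_pos ht.1
  exact (ContinuousAt.div ((Real.continuousAt_log ht0.ne').pow m)
    continuousAt_id ht0.ne').continuousWithinAt

lemma ftc_log_pow (m : ℕ) {x : ℝ} (hx : 1 ≤ x) :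
    ∫ z in (1:ℝ)..x, (Real.log z)^m / z = (Real.log x)^(m+1) / ((m:ℝ)+1) := by
  have key : ∀ t ∈ uIcc (1:ℝ) x,
      HasDerivAt (fun z => (Real.log z)^(m+1) / ((m:ℝ)+1)) ((Real.log t)^m / t) t := by
    intro t ht
    rw [uIcc_of_le hx] at ht
    have ht0 : (0:ℝ) < t := lt_of_lt_of_le one_pos ht.1
    have h1 : HasDerivAt (fun z => (Real.log z)^(m+1))
        ((↑(m+1) : ℝ) * (Real.log t)^m * t⁻¹) t :=
      (Real.hasDerivAt_log ht0.ne').pow (m+1)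
    have h2 := h1.div_const ((m:ℝ)+1)
    refine h2.congr_deriv ?_
    push_cast
    field_simp
  have hInt : IntervalIntegrable (fun z => (Real.log z)^m / z) volume 1 x :=
    (gC_contOn m hx).intervalIntegrable
  rw [intervalIntegral.integral_eq_sub_of_hasDerivAt key hInt]
  simp [Real.log_one]

lemma main_est (m : ℕ) : ∃ B : ℝ, 0 ≤ B ∧ ∀ x : ℝ, 1 ≤ x →
    |(∫ z in (0:ℝ)..x, fC m z) - (Real.log x)^(m+1) / ((m:ℝ)+1)| ≤ B := by
  set c : ℝ := (2*((m:ℝ)+1))^m with hc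
  have hc0 : 0 < c := by positivity
  refine ⟨|∫ z in (0:ℝ)..1, fC m z| + 6*c, by positivity, fun x hx => ?_⟩
  have hI1 := fC_intInt01 m
  have hI2 := fC_intInt_one m hx
  have hsplit : (∫ z in (0:ℝ)..x, fC m z)
      = (∫ z in (0:ℝ)..1, fC m z) + ∫ z in (1:ℝ)..x, fC m z :=
    (intervalIntegral.integral_add_adjacent_intervals hI1 hI2).symm
  -- error integral
  have hgInt : IntervalIntegrable (fun z => (Real.log z)^m / z) volume 1 x :=
    (gC_contOn m hx).intervalIntegrable
  have hdInt : IntervalIntegrable (fun z => (Real.log z)^m / z - fC m z) volume 1 x :=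
    hgInt.sub hI2
  have hrInt : IntervalIntegrable (fun z => 3*c* z ^ (-(3:ℝ)/2)) volume 1 x := by
    apply ContinuousOn.intervalIntegrable
    intro t ht
    rw [uIcc_of_le hx] at ht
    have ht0 : (0:ℝ) < t := lt_of_lt_of_le one_pos ht.1
    exact (continuousAt_const.mul
      (Real.continuousAt_rpow_const t _ (Or.inl ht0.ne'))).continuousWithinAt
  set E : ℝ := ∫ z in (1:ℝ)..x, ((Real.log z)^m / z - fC m z) with hE
  have hE0 : 0 ≤ E := by
    apply intervalIntegral.integral_nonneg hx
    intro u hu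
    exact (diff_bound m hu.1).1
  have hE6 : E ≤ 6*c := by
    have h1 : E ≤ ∫ z in (1:ℝ)..x, 3*c* z ^ (-(3:ℝ)/2) := by
      apply intervalIntegral.integral_mono_on hx hdInt hrInt
      intro u hu
      have := (diff_bound m hu.1).2
      linarith [this]
    have h2 : (∫ z in (1:ℝ)..x, 3*c* z ^ (-(3:ℝ)/2)) ≤ 6*c := by
      rw [intervalIntegral.integral_const_mul, integral_rpow]
      · have hx0 : (0:ℝ) < x := lt_of_lt_of_le one_pos hx
        have h3 : (0:ℝ) ≤ x ^ (-(3:ℝ)/2 + 1) := Real.rpow_nonneg hx0.le _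
        rw [Real.one_rpow]
        have : (x ^ (-(3:ℝ)/2 + 1) - 1) / (-(3:ℝ)/2 + 1) ≤ 2 := by
          rw [div_le_iff_of_neg (by norm_num : (-(3:ℝ)/2 + 1) < 0)]
          nlinarith
        nlinarith
      · right
        constructor
        · norm_num
        · rw [uIcc_of_le hx]
          intro h
          exact absurd h.1 (by norm_num)
    linarith
  have h1x : (∫ z in (1:ℝ)..x, fC m z)
      = (Real.log x)^(m+1) / ((m:ℝ)+1) - E := by
    rw [hE, intervalIntegral.integral_sub hgInt hI2, ftc_log_pow m hx]
    ring
  rw [hsplit, h1x]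
  have habs : ∀ a b e : ℝ, 0 ≤ e → e ≤ 6*c → |a + (b - e) - b| ≤ |a| + 6*c := by
    intro a b e he0 he6
    rw [abs_le]
    constructor <;> [skip; skip] <;> cases' abs_cases a with h h <;> nlinarith
  exact habs _ _ _ hE0 hE6

end AppendixCAux

/-- Appendix C: for every integer `m ≥ 0`, the quantity
`∫₀^{1/q} z·(log z)^m/(z+1)² dz`, divided by `(1/(m+1))·(log(1/q))^{m+1}`, tends to `1`
as `q → 0⁺`; in particular the integral is `Θ((−log q)^{m+1})` as `q → 0⁺`. -/
theorem appendix_integral_asymptotics (m : ℕ) :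
    Tendsto
      (fun q : ℝ =>
        (∫ z in (0:ℝ)..(1/q), z * (Real.log z) ^ m / (z + 1) ^ 2) /
          ((1 / ((m:ℝ) + 1)) * (Real.log (1/q)) ^ (m + 1)))
      (𝓝[>] (0:ℝ)) (𝓝 1) ∧
    IsThetaAtZero
      (fun q : ℝ => ∫ z in (0:ℝ)..(1/q), z * (Real.log z) ^ m / (z + 1) ^ 2)
      (fun q : ℝ => (-Real.log q) ^ (m + 1)) := by
  obtain ⟨B, hB0, hB⟩ := main_est m
  set F : ℝ → ℝ := fun q => ∫ z in (0:ℝ)..(1/q), z * (Real.log z) ^ m / (z + 1) ^ 2 with hF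
  set D : ℝ → ℝ := fun q => (1 / ((m:ℝ) + 1)) * (Real.log (1/q)) ^ (m + 1) with hD
  have hFf : ∀ q : ℝ, F q = ∫ z in (0:ℝ)..(1/q), fC m z := fun q => rfl
  -- D tends to atTop
  have hL : Tendsto (fun q : ℝ => Real.log (1/q)) (𝓝[>] (0:ℝ)) atTop := by
    have h1 : Tendsto (fun q : ℝ => 1/q) (𝓝[>] (0:ℝ)) atTop := by
      simpa [one_div] using tendsto_inv_nhdsGT_zero
    exact Real.tendsto_log_atTop.comp h1
  have hDtop : Tendsto D (𝓝[>] (0:ℝ)) atTop := by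
    have h1 : Tendsto (fun q : ℝ => (Real.log (1/q)) ^ (m+1)) (𝓝[>] (0:ℝ)) atTop :=
      (tendsto_pow_atTop (Nat.succ_ne_zero m)).comp hL
    exact h1.const_mul_atTop (by positivity)
  -- eventual facts
  have hev1 : ∀ᶠ q in 𝓝[>] (0:ℝ), (1:ℝ) ≤ 1/q := by
    filter_upwards [Ioo_mem_nhdsGT_of_mem (by constructor <;> norm_num : (0:ℝ) ∈ Ico 0 1)]
      with q hq
    rw [le_div_iff₀ hq.1]
    linarith [hq.2]
  have hevD : ∀ᶠ q in 𝓝[>] (0:ℝ), 0 < D q := hDtop.eventually_gt_atTop 0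
  -- |F - D| ≤ B eventually
  have hFD : ∀ᶠ q in 𝓝[>] (0:ℝ), |F q - D q| ≤ B := by
    filter_upwards [hev1] with q hq
    have := hB (1/q) hq
    rw [hFf q]
    calc |F q - D q| = |(∫ z in (0:ℝ)..(1/q), fC m z)
        - (Real.log (1/q))^(m+1) / ((m:ℝ)+1)| := by
          rw [hFf, hD]
          ring_nf
      _ ≤ B := this
  -- ratio tends to 1
  have htend : Tendsto (fun q => F q / D q) (𝓝[>] (0:ℝ)) (𝓝 1) := by
    have hdiff : Tendsto (fun q => (F q - D q) / D q) (𝓝[>] (0:ℝ)) (𝓝 0) := by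
      have hbound : ∀ᶠ q in 𝓝[>] (0:ℝ), ‖(F q - D q)/D q‖ ≤ B * (D q)⁻¹ := by
        filter_upwards [hFD, hevD] with q h1 h2
        rw [Real.norm_eq_abs, abs_div, abs_of_pos h2, div_eq_mul_inv]
        exact mul_le_mul_of_nonneg_right h1 (by positivity)
      have hlim0 : Tendsto (fun q => B * (D q)⁻¹) (𝓝[>] (0:ℝ)) (𝓝 0) := by
        simpa using hDtop.inv_tendsto_atTop.const_mul B
      exact squeeze_zero_norm' hbound hlim0
    have h1 : Tendsto (fun q => 1 + (F q - D q) / D q) (𝓝[>] (0:ℝ)) (𝓝 1) := by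
      simpa using tendsto_const_nhds.add hdiff
    apply h1.congr'
    filter_upwards [hevD] with q h2
    field_simp
    ring
  refine ⟨htend, ?_⟩
  -- Theta part
  have h12 := htend.eventually (eventually_gt_nhds (show (1:ℝ)/2 < 1 by norm_num))
  have h2 := htend.eventually (eventually_lt_nhds (show (1:ℝ) < 2 by norm_num))
  have hall : ∀ᶠ q in 𝓝[>] (0:ℝ),
      (1:ℝ)/2 < F q / D q ∧ F q / D q < 2 ∧ 0 < D q := by
    filter_upwards [h12, h2, hevD] with q a b c
    exact ⟨a, b, c⟩
  rw [eventually_nhdsWithin_iff] at hall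
  rw [Metric.eventually_nhds_iff] at hall
  obtain ⟨ε, hε, hP⟩ := hall
  refine ⟨1/(2*((m:ℝ)+1)), 2/((m:ℝ)+1), ε, by positivity, ?_, hε, ?_⟩
  · rw [div_le_div_iff₀ (by positivity) (by positivity)]
    nlinarith [Nat.cast_nonneg (α := ℝ) m]
  intro q hq0 hqε
  have hd : dist q 0 < ε := by
    rw [Real.dist_eq, sub_zero, abs_of_pos hq0]
    exact hqε
  obtain ⟨ha, hb, hc⟩ := hP hd hq0
  have hRD : D q = (1/((m:ℝ)+1)) * (-Real.log q) ^ (m+1) := by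
    simp only [hD]
    rw [one_div q, Real.log_inv]
  have h1 : (1/2 : ℝ) * D q < F q := (lt_div_iff₀ hc).mp ha
  have h2' : F q < 2 * D q := (div_lt_iff₀ hc).mp hb
  constructor
  · calc (1/(2*((m:ℝ)+1))) * (-Real.log q) ^ (m+1) = (1/2 : ℝ) * D q := by rw [hRD]; field_simp
      _ ≤ F q := h1.le
  · calc F q ≤ 2 * D q := h2'.le
      _ = (2/((m:ℝ)+1)) * (-Real.log q) ^ (m+1) := by rw [hRD]; field_simp
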